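/- There exist infinitely many pairs of rational numbers (U, V) satisfying V^2 = -63 U^4 + 16128. -/

import Mathlib

open Function

local notation "v" => padicValRat 2

/-- doubling map on the elliptic curve `y² = x³ + 196x` -/
noncomputable def dblP (P : ℚ × ℚ) : ℚ × ℚ :=
  (((3*P.1^2+196)/(2*P.2))^2 - 2*P.1,
   ((3*P.1^2+196)/(2*P.2)) * (P.1 - (((3*P.1^2+196)/(2*P.2))^2 - 2*P.1)) - P.2)

noncomputable def seedP : ℚ × ℚ :=
  (2737277761/1635393600, -1206400683497759/66135317184000)

noncomputable def seqP : ℕ → ℚ × ℚ := fun n => dblP^[n] seedP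

/-- the map from the elliptic curve to the quartic `V² = -63U⁴ + 16128` -/
noncomputable def ψ (P : ℚ × ℚ) : ℚ × ℚ :=
  ((12*P.1^2 - 2352 + 70*P.2) / (4*P.1^2 + 63*P.1 + 784),
   (420*(4*P.1^4 - 63*P.1^3 + 12348*P.1 - 153664) - 1008*(9*P.1^2 + 448*P.1 + 1764)*P.2)
     / (4*P.1^2 + 63*P.1 + 784)^2)

lemma v_int_odd (a : ℤ) (h : a % 2 = 1) : v (a : ℚ) = 0 := by
  rw [padicValRat.of_int, padicValInt.eq_zero_of_not_dvd]
  · rfl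
  · push_cast
    omega

lemma v_two_pow_mul (a : ℤ) (n : ℕ) (h : a % 2 = 1) :
    v ((a : ℚ) * 2 ^ n) = n := by
  have ha : (a : ℚ) ≠ 0 := by
    intro h0; rw [Int.cast_eq_zero] at h0; omega
  rw [padicValRat.mul ha (by positivity), v_int_odd a h,
    padicValRat.pow _]
  have h2 : v (2 : ℚ) = 1 := by
    have := padicValRat.self (p := 2) (by norm_num)
    simpa using this
  rw [h2]; ring

lemma v2 : v (2:ℚ) = 1 := by
  have := padicValRat.self (p := 2) (by norm_num)
  simpa using this
lemma v3 : v (3:ℚ) = 0 := by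
  simpa using v_int_odd 3 (by norm_num)
lemma v63 : v (63:ℚ) = 0 := by
  simpa using v_int_odd 63 (by norm_num)
lemma v189 : v (189:ℚ) = 0 := by
  simpa using v_int_odd 189 (by norm_num)
lemma v196 : v (196:ℚ) = 2 := by
  have h : (196:ℚ) = ((49:ℤ):ℚ) * 2^2 := by norm_num
  rw [h]; exact_mod_cast v_two_pow_mul 49 2 (by norm_num)
lemma v70 : v (70:ℚ) = 1 := by
  have h : (70:ℚ) = ((35:ℤ):ℚ) * 2^1 := by norm_num
  rw [h]; exact_mod_cast v_two_pow_mul 35 1 (by norm_num)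
lemma v4704 : v (4704:ℚ) = 5 := by
  have h : (4704:ℚ) = ((147:ℤ):ℚ) * 2^5 := by norm_num
  rw [h]; exact_mod_cast v_two_pow_mul 147 5 (by norm_num)
lemma v4 : v (4:ℚ) = 2 := by
  have h : (4:ℚ) = ((1:ℤ):ℚ) * 2^2 := by norm_num
  rw [h]; exact_mod_cast v_two_pow_mul 1 2 (by norm_num)
lemma v784 : v (784:ℚ) = 4 := by
  have h : (784:ℚ) = ((49:ℤ):ℚ) * 2^4 := by norm_num
  rw [h]; exact_mod_cast v_two_pow_mul 49 4 (by norm_num)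

lemma vadd {a b : ℚ} (ha : a ≠ 0) (hb : b ≠ 0) (h : v a < v b) :
    v (a + b) = v a := by
  have hab : a + b ≠ 0 := by
    intro h0
    have : b = -a := by linarith
    rw [this, padicValRat.neg] at h
    exact lt_irrefl _ h
  exact padicValRat.add_eq_of_lt hab ha hb h

lemma v_y {x y : ℚ} {k : ℤ} (hk : 2 ≤ k) (hc : y^2 = x^3 + 196*x)
    (hx : v x = -2*k) : y ≠ 0 ∧ x ≠ 0 ∧ v y = -3*k := by
  have hx0 : x ≠ 0 := by
    intro h0; rw [h0, padicValRat.zero] at hx; omega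
  have hxx : x^2 + 196 > 0 := by positivity
  have hy0 : y ≠ 0 := by
    intro h0
    rw [h0] at hc
    have h5 : x * (x^2 + 196) = 0 := by linear_combination -hc
    rcases mul_eq_zero.1 h5 with h | h
    · exact hx0 h
    · linarith
  refine ⟨hy0, hx0, ?_⟩
  have h1 : v (x^3) = -6*k := by
    rw [padicValRat.pow _, hx]; ring
  have h2 : v (196*x) = 2 - 2*k := by
    rw [padicValRat.mul (by norm_num) hx0, v196, hx]; ring
  have h3 : v (x^3 + 196*x) = -6*k := by
    rw [vadd (pow_ne_zero _ hx0) (mul_ne_zero (by norm_num) hx0)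
      (by rw [h1, h2]; omega)]
    exact h1
  have h4 : v (y^2) = -6*k := by rw [hc]; exact h3
  rw [padicValRat.pow _] at h4
  omega

lemma step {P : ℚ × ℚ} {k : ℤ} (hk : 2 ≤ k) (hc : P.2^2 = P.1^3 + 196*P.1)
    (hx : v P.1 = -2*k) :
    (dblP P).2^2 = (dblP P).1^3 + 196*(dblP P).1 ∧
      v (dblP P).1 = -2*(k+1) := by
  obtain ⟨x, y⟩ := P
  simp only at hc hx
  obtain ⟨hy0, hx0, hvy⟩ := v_y hk hc hx
  have h2y : (2:ℚ)*y ≠ 0 := mul_ne_zero two_ne_zero hy0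
  constructor
  · simp only [dblP]
    field_simp
    ring_nf
    linear_combination (64*y^6) * hc
  · simp only [dblP]
    have hN : (3*x^2 + 196 : ℚ) > 0 := by positivity
    have hNv : v (3*x^2 + 196) = -4*k := by
      have hA : v (3*x^2 : ℚ) = -4*k := by
        rw [padicValRat.mul (by norm_num) (pow_ne_zero _ hx0), v3,
          padicValRat.pow _, hx]
        ring
      rw [vadd (by positivity) (by norm_num) (by rw [hA, v196]; omega)]
      exact hA
    have hm0 : (3*x^2+196)/(2*y) ≠ 0 := div_ne_zero (ne_of_gt hN) h2y
    have hv2y : v (2*y) = 1 - 3*k := by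
      rw [padicValRat.mul (by norm_num) hy0, v2, hvy]; ring
    have hvm : v ((3*x^2+196)/(2*y)) = -k - 1 := by
      rw [padicValRat.div (ne_of_gt hN) h2y, hNv, hv2y]; ring
    have hvm2 : v (((3*x^2+196)/(2*y))^2) = -2*k - 2 := by
      rw [padicValRat.pow _, hvm]; ring
    have hv2x : v (-(2*x)) = 1 - 2*k := by
      rw [padicValRat.neg, padicValRat.mul (by norm_num) hx0, v2, hx]; ring
    have key : v (((3*x^2+196)/(2*y))^2 + -(2*x)) = -2*k - 2 := by
      rw [vadd (pow_ne_zero _ hm0) (by simpa using mul_ne_zero (two_ne_zero) hx0)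
        (by rw [hvm2, hv2x]; omega)]
      exact hvm2
    have hrw : ((3*x^2+196)/(2*y))^2 - 2*x = ((3*x^2+196)/(2*y))^2 + -(2*x) := by ring
    show v (((3*x^2+196)/(2*y))^2 - 2*x) = -2*(k+1)
    rw [hrw, key]; ring

lemma seq_inv (n : ℕ) :
    (seqP n).2^2 = (seqP n).1^3 + 196*(seqP n).1 ∧
      v (seqP n).1 = -2*((n : ℤ) + 3) := by
  induction n with
  | zero =>
    constructor
    · show ((-1206400683497759/66135317184000 : ℚ))^2 = _
      norm_num [seqP, seedP]
    · show v ((2737277761 : ℚ)/1635393600) = -6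
      have h1 : (2737277761 : ℚ)/1635393600 =
          ((2737277761 : ℤ) : ℚ) / (((25553025 : ℤ) : ℚ) * 2^6) := by norm_num
      rw [h1, padicValRat.div (by norm_num) (by norm_num),
        padicValRat.mul (by norm_num) (by norm_num),
        v_int_odd 2737277761 (by norm_num), v_int_odd 25553025 (by norm_num),
        padicValRat.pow _, v2]
      ring
  | succ n ih =>
    have h : seqP (n+1) = dblP (seqP n) := by
      simp [seqP, Function.iterate_succ_apply']
    obtain ⟨hc, hx⟩ := ih
    have hs := step (k := (n:ℤ)+3) (by omega) hc hx
    rw [h]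
    exact ⟨hs.1, by rw [hs.2]; push_cast; ring⟩

lemma psi_mem {P : ℚ × ℚ} (hc : P.2^2 = P.1^3 + 196*P.1) :
    (ψ P).2^2 = -63*(ψ P).1^4 + 16128 := by
  obtain ⟨x, y⟩ := P
  simp only at hc
  have hD : (4*x^2 + 63*x + 784 : ℚ) > 0 := by nlinarith [sq_nonneg (8*x+63)]
  simp only [ψ]
  have hD' : (4*x^2 + 63*x + 784 : ℚ) ≠ 0 := ne_of_gt hD
  rw [div_pow, div_pow, ← pow_mul, mul_div_assoc', div_add' _ _ _ (pow_ne_zero _ hD'),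
    div_left_inj' (pow_ne_zero _ hD')]
  linear_combination (
    (13407874873344 - 203297472000*y + 1512630000*y^2 + 1902409338816*x
      + 131637187584*x^2 + 1037232000*x^2*y + 9706170096*x^3 + 349017984*x^4)) * hc

lemma psi_val {P : ℚ × ℚ} {k : ℤ} (hk : 2 ≤ k) (hc : P.2^2 = P.1^3 + 196*P.1)
    (hx : v P.1 = -2*k) : v ((ψ P).1 - 3) = k - 1 := by
  obtain ⟨x, y⟩ := P
  simp only at hc hx
  obtain ⟨hy0, hx0, hvy⟩ := v_y hk hc hx
  have hD : (4*x^2 + 63*x + 784 : ℚ) > 0 := by nlinarith [sq_nonneg (8*x+63)]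
  have heq : (ψ (x, y)).1 - 3 = (70*y + -(189*x) + -(4704 : ℚ)) / (4*x^2 + 63*x + 784) := by
    simp only [ψ]
    have hD' : (4*x^2 + 63*x + 784 : ℚ) ≠ 0 := ne_of_gt hD
    rw [eq_div_iff hD', sub_mul, div_mul_cancel₀ _ hD']
    ring
  have hva : v (70*y) = 1 - 3*k := by
    rw [padicValRat.mul (by norm_num) hy0, v70, hvy]; ring
  have hvb : v (-(189*x)) = -2*k := by
    rw [padicValRat.neg, padicValRat.mul (by norm_num) hx0, v189, hx]; ring
  have hvc : v (-(4704 : ℚ)) = 5 := by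
    rw [padicValRat.neg, v4704]
  have hnum1 : v (70*y + -(189*x)) = 1 - 3*k := by
    rw [vadd (mul_ne_zero (by norm_num) hy0)
      (by simpa using mul_ne_zero (by norm_num : (189:ℚ) ≠ 0) hx0)
      (by rw [hva, hvb]; omega)]
    exact hva
  have hgnum1 : (70*y + -(189*x) : ℚ) ≠ 0 := by
    intro h0
    rw [h0, padicValRat.zero] at hnum1
    omega
  have hnum : v (70*y + -(189*x) + -(4704 : ℚ)) = 1 - 3*k := by
    rw [vadd hgnum1 (by norm_num) (by rw [hnum1, hvc]; omega)]
    exact hnum1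
  have hda : v (4*x^2) = 2 - 4*k := by
    rw [padicValRat.mul (by norm_num) (pow_ne_zero _ hx0), v4,
      padicValRat.pow _, hx]; ring
  have hdb : v (63*x) = -2*k := by
    rw [padicValRat.mul (by norm_num) hx0, v63, hx]; ring
  have hden1 : v (4*x^2 + 63*x) = 2 - 4*k := by
    rw [vadd (by positivity) (mul_ne_zero (by norm_num) hx0)
      (by rw [hda, hdb]; omega)]
    exact hda
  have hgden1 : (4*x^2 + 63*x : ℚ) ≠ 0 := by
    intro h0
    rw [h0, padicValRat.zero] at hden1
    omega
  have hden : v (4*x^2 + 63*x + 784) = 2 - 4*k := by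
    rw [vadd hgden1 (by norm_num) (by rw [hden1, v784]; omega)]
    exact hden1
  have hnum0 : (70*y + -(189*x) + -(4704 : ℚ)) ≠ 0 := by
    intro h0
    rw [h0, padicValRat.zero] at hnum
    omega
  rw [heq, padicValRat.div hnum0 (ne_of_gt hD), hnum, hden]
  ring

theorem infinitely_many_rational_points :
    {p : ℚ × ℚ | p.2 ^ 2 = -63 * p.1 ^ 4 + 16128}.Infinite := by
  refine Set.infinite_of_injective_forall_mem (f := fun n : ℕ => ψ (seqP n)) ?_ ?_
  · intro m n hmn
    have hm := seq_inv m
    have hn := seq_inv n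
    have h1 : (ψ (seqP m)).1 = (ψ (seqP n)).1 := by simp only at hmn; rw [hmn]
    have hvm : v ((ψ (seqP m)).1 - 3) = ((m : ℤ) + 3) - 1 :=
      psi_val (k := (m:ℤ)+3) (by omega) hm.1 hm.2
    have hvn : v ((ψ (seqP n)).1 - 3) = ((n : ℤ) + 3) - 1 :=
      psi_val (k := (n:ℤ)+3) (by omega) hn.1 hn.2
    rw [h1] at hvm
    rw [hvm] at hvn
    omega
  · intro n
    have hn := seq_inv n
    exact psi_mem hn.1
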